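/- Insufficiency construction, key inequality: let ρ_a = ε+P+Π+Λ_a > 0, define m̃_a = ρ_a − (2η+λ_{πΠ}Π)/(2τ_π) − τ_{ππ}Λ_a/(2τ_π), R_a = (1/(6τ_π))(2η+λ_{πΠ}Π+(τ_{ππ}/2)Λ_a) + (ζ+λ_{Ππ}Λ_a)/τ_Π + ρ_a c_s², with m̃_{a_1} = R_{a_1} for some index a_1 minimizing m̃_d − R_d, and suppose 1 − c_s² − τ_{ππ}/(3τ_π) − λ_{Ππ}/τ_Π < 0 and Λ_{a_2} > Λ_{a_1}. Then 1 − R_{a_2}/m̄⁰_{a_2}(1) = (Λ_{a_2}−Λ_{a_1})(1 − c_s² − τ_{ππ}/(3τ_π) − λ_{Ππ}/τ_Π)/m̄⁰_{a_2}(1) < 0, where m̄⁰_{a_2}(1) = m̃_{a_1} + (Λ_{a_2}−Λ_{a_1})(1 − τ_{ππ}/(4τ_π)) > 0. -/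
import Mathlib


/-- Insufficiency construction, key inequality. With
`ρ_a = ε+P+Π+Λ_a > 0`,
`m̃_a = ρ_a − (2η+λ_{πΠ}Π)/(2τ_π) − τ_{ππ}Λ_a/(2τ_π)`,
`R_a = (1/(6τ_π))(2η+λ_{πΠ}Π+(τ_{ππ}/2)Λ_a) + (ζ+λ_{Ππ}Λ_a)/τ_Π + ρ_a c_s²`,
if `m̃_{a₁} = R_{a₁}`, `1 − c_s² − τ_{ππ}/(3τ_π) − λ_{Ππ}/τ_Π < 0`,
`Λ_{a₂} > Λ_{a₁}`, and `m̄⁰_{a₂}(1) = m̃_{a₁} + (Λ_{a₂}−Λ_{a₁})(1 − τ_{ππ}/(4τ_π)) > 0`,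
then `1 − R_{a₂}/m̄⁰_{a₂}(1) = (Λ_{a₂}−Λ_{a₁})(1 − c_s² − τ_{ππ}/(3τ_π) − λ_{Ππ}/τ_Π)/m̄⁰_{a₂}(1) < 0`.
Here `Pb` denotes `Π`, `lπPb` denotes `λ_{πΠ}`, `lBπ` denotes `λ_{Ππ}`,
and `τB` denotes `τ_Π`. -/
theorem stmt_15 (ε P Pb η lπPb τππ τπ ζ lBπ τB cs2 La1 La2 : ℝ)
    (hτπ : 0 < τπ) (hτB : 0 < τB)
    (hη : 0 ≤ η) (hζ : 0 ≤ ζ) (hτππ : 0 ≤ τππ) (hlπ : 0 ≤ lπPb)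
    (hlB : 0 ≤ lBπ) (hcs : 0 ≤ cs2)
    (hρ1 : 0 < ε + P + Pb + La1) (hρ2 : 0 < ε + P + Pb + La2)
    (hEq : (ε + P + Pb + La1) - (2 * η + lπPb * Pb) / (2 * τπ)
        - τππ * La1 / (2 * τπ)
      = (1 / (6 * τπ)) * (2 * η + lπPb * Pb + (τππ / 2) * La1)
        + (ζ + lBπ * La1) / τB + (ε + P + Pb + La1) * cs2)
    (hneg : 1 - cs2 - τππ / (3 * τπ) - lBπ / τB < 0)
    (hΛ : La2 > La1)
    (hm0 : 0 < ((ε + P + Pb + La1) - (2 * η + lπPb * Pb) / (2 * τπ)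
        - τππ * La1 / (2 * τπ)) + (La2 - La1) * (1 - τππ / (4 * τπ))) :
    (1 - ((1 / (6 * τπ)) * (2 * η + lπPb * Pb + (τππ / 2) * La2)
          + (ζ + lBπ * La2) / τB + (ε + P + Pb + La2) * cs2)
        / (((ε + P + Pb + La1) - (2 * η + lπPb * Pb) / (2 * τπ)
            - τππ * La1 / (2 * τπ)) + (La2 - La1) * (1 - τππ / (4 * τπ)))
      = (La2 - La1) * (1 - cs2 - τππ / (3 * τπ) - lBπ / τB)
        / (((ε + P + Pb + La1) - (2 * η + lπPb * Pb) / (2 * τπ)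
            - τππ * La1 / (2 * τπ)) + (La2 - La1) * (1 - τππ / (4 * τπ)))) ∧
    (1 - ((1 / (6 * τπ)) * (2 * η + lπPb * Pb + (τππ / 2) * La2)
          + (ζ + lBπ * La2) / τB + (ε + P + Pb + La2) * cs2)
        / (((ε + P + Pb + La1) - (2 * η + lπPb * Pb) / (2 * τπ)
            - τππ * La1 / (2 * τπ)) + (La2 - La1) * (1 - τππ / (4 * τπ)))
      < 0) := by
  set R2 := (1 / (6 * τπ)) * (2 * η + lπPb * Pb + (τππ / 2) * La2)
          + (ζ + lBπ * La2) / τB + (ε + P + Pb + La2) * cs2 with hR2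
  set m := ((ε + P + Pb + La1) - (2 * η + lπPb * Pb) / (2 * τπ)
            - τππ * La1 / (2 * τπ)) + (La2 - La1) * (1 - τππ / (4 * τπ)) with hmdef
  have hmne : m ≠ 0 := ne_of_gt hm0
  have key : m - R2 = (La2 - La1) * (1 - cs2 - τππ / (3 * τπ) - lBπ / τB) := by
    rw [hmdef, hR2]
    linear_combination hEq
  have heq : 1 - R2 / m
      = (La2 - La1) * (1 - cs2 - τππ / (3 * τπ) - lBπ / τB) / m := by
    rw [← key]
    field_simp
  refine ⟨heq, ?_⟩
  rw [heq]
  apply div_neg_of_neg_of_pos _ hm0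
  exact mul_neg_of_pos_of_neg (by linarith) hneg
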